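/- arXiv:1803.10068 — 3 statements merged into one kernel-verified Lean document; each statement's English description precedes it below -/
import Mathlib

section
/- For all complex numbers z1, z2 and every ε ≥ 0, defining f_ε(z) = z·ln(ε + |z|), one has |Im((f_ε(z1) − f_ε(z2))·(conj(z1) − conj(z2)))| ≤ |z1 − z2|². -/
open Complex

lemma aux_stmt0 (ε : ℝ) (hε : 0 ≤ ε) (z1 z2 : ℂ)
    (h : ‖z2‖ ≤ ‖z1‖) :
    |((z1 * (Real.log (ε + ‖z1‖) : ℂ) -
        z2 * (Real.log (ε + ‖z2‖) : ℂ)) *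
        ((starRingEnd ℂ) z1 - (starRingEnd ℂ) z2)).im| ≤
      (‖z1 - z2‖)^2 := by
  set a := Real.log (ε + ‖z1‖) with ha
  set b := Real.log (ε + ‖z2‖) with hb
  have him : ((z1 * (a : ℂ) - z2 * (b : ℂ)) *
      ((starRingEnd ℂ) z1 - (starRingEnd ℂ) z2)).im
      = (b - a) * (z1 * (starRingEnd ℂ) z2).im := by
    simp [Complex.mul_im, Complex.sub_im, Complex.sub_re, Complex.mul_re,
      Complex.conj_re, Complex.conj_im, Complex.ofReal_re, Complex.ofReal_im]
    ring
  rw [him, abs_mul]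
  rcases eq_or_lt_of_le (norm_nonneg z2) with h0 | h0
  · have hz2 : z2 = 0 := by
      have := norm_eq_zero.mp h0.symm
      exact this
    simp [hz2, sq_nonneg]
  · -- z2 ≠ 0
    have h1 : |(z1 * (starRingEnd ℂ) z2).im| ≤ ‖z1 - z2‖ * ‖z2‖ := by
      have heq : (z1 * (starRingEnd ℂ) z2).im = ((z1 - z2) * (starRingEnd ℂ) z2).im := by
        have h2 : (z2 * (starRingEnd ℂ) z2).im = 0 := by
          rw [Complex.mul_conj]; simp
        have : (z1 - z2) * (starRingEnd ℂ) z2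
            = z1 * (starRingEnd ℂ) z2 - z2 * (starRingEnd ℂ) z2 := by ring
        rw [this, Complex.sub_im, h2, sub_zero]
      rw [heq]
      calc |((z1 - z2) * (starRingEnd ℂ) z2).im|
          ≤ ‖(z1 - z2) * (starRingEnd ℂ) z2‖ := Complex.abs_im_le_norm _
        _ = ‖z1 - z2‖ * ‖z2‖ := by
            rw [norm_mul, Complex.norm_conj]
    have hd2 : (0:ℝ) < ε + ‖z2‖ := by linarith
    have hd1 : (0:ℝ) < ε + ‖z1‖ := by linarith
    have h2 : |b - a| ≤ (‖z1‖ - ‖z2‖) / ‖z2‖ := by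
      have hab : b ≤ a := Real.log_le_log hd2 (by linarith)
      rw [abs_sub_comm, _root_.abs_of_nonneg (by linarith)]
      have hlog : a - b = Real.log ((ε + ‖z1‖) / (ε + ‖z2‖)) := by
        rw [Real.log_div hd1.ne' hd2.ne']
      rw [hlog]
      calc Real.log ((ε + ‖z1‖) / (ε + ‖z2‖))
          ≤ (ε + ‖z1‖) / (ε + ‖z2‖) - 1 :=
            Real.log_le_sub_one_of_pos (div_pos hd1 hd2)
        _ = (‖z1‖ - ‖z2‖) / (ε + ‖z2‖) := by
            field_simp; ring
        _ ≤ (‖z1‖ - ‖z2‖) / ‖z2‖ := by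
            apply div_le_div_of_nonneg_left (by linarith) h0 (by linarith)
    have h3 : ‖z1‖ - ‖z2‖ ≤ ‖z1 - z2‖ := by
      have := abs_norm_sub_norm_le z1 z2
      calc ‖z1‖ - ‖z2‖ ≤ |‖z1‖ - ‖z2‖| :=
            le_abs_self _
        _ ≤ ‖z1 - z2‖ := this
    calc |b - a| * |(z1 * (starRingEnd ℂ) z2).im|
        ≤ ((‖z1‖ - ‖z2‖) / ‖z2‖) *
          (‖z1 - z2‖ * ‖z2‖) := by
          exact mul_le_mul h2 h1 (abs_nonneg _) (div_nonneg (by linarith) h0.le)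
      _ = (‖z1‖ - ‖z2‖) * ‖z1 - z2‖ := by
          field_simp
      _ ≤ ‖z1 - z2‖ * ‖z1 - z2‖ := by
          apply mul_le_mul_of_nonneg_right h3 (norm_nonneg _)
      _ = (‖z1 - z2‖)^2 := (sq _).symm

theorem stmt_0 (ε : ℝ) (hε : 0 ≤ ε) (z1 z2 : ℂ)
    (f : ℂ → ℂ) (hf : ∀ z : ℂ, f z = z * (Real.log (ε + ‖z‖) : ℂ)) :
    |((f z1 - f z2) * ((starRingEnd ℂ) z1 - (starRingEnd ℂ) z2)).im| ≤
      (‖z1 - z2‖)^2 := by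
  rw [hf, hf]
  rcases le_total (‖z2‖) (‖z1‖) with h | h
  · exact aux_stmt0 ε hε z1 z2 h
  · have key := aux_stmt0 ε hε z2 z1 h
    have heq : (z1 * (Real.log (ε + ‖z1‖) : ℂ) -
        z2 * (Real.log (ε + ‖z2‖) : ℂ)) *
        ((starRingEnd ℂ) z1 - (starRingEnd ℂ) z2)
        = (z2 * (Real.log (ε + ‖z2‖) : ℂ) -
        z1 * (Real.log (ε + ‖z1‖) : ℂ)) *
        ((starRingEnd ℂ) z2 - (starRingEnd ℂ) z1) := by ring
    have habs : ‖z1 - z2‖ = ‖z2 - z1‖ :=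
      norm_sub_rev z1 z2
    rw [heq, habs]
    exact key
end

section
/- Let Ω ⊆ ℝ^d with finite measure, λ ∈ ℝ, ε > 0, and u₀ ∈ L¹(Ω) ∩ L²(Ω). Then |E^ε(u₀) − E(u₀)| ≤ 4ε|λ|·‖u₀‖_{L¹(Ω)}, where E(u₀) = ∫_Ω [|∇u₀|² + λ(|u₀|²·ln|u₀|² − |u₀|²)] dx and E^ε(u₀) = ∫_Ω [|∇u₀|² + λ F_ε(|u₀|²)] dx with F_ε(ρ) = ρ·ln((ε+√ρ)²) − ρ + 2ε√ρ − ε²·ln((1+√ρ/ε)²). -/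
open MeasureTheory

noncomputable def Feps (ε ρ : ℝ) : ℝ :=
  ρ * Real.log ((ε + Real.sqrt ρ)^2) - ρ + 2 * ε * Real.sqrt ρ
    - ε^2 * Real.log ((1 + Real.sqrt ρ / ε)^2)

lemma Feps_key (ε : ℝ) (hε : 0 < ε) (a : ℝ) (ha : 0 ≤ a) :
    |Feps ε (a^2) - (a^2 * Real.log (a^2) - a^2)| ≤ 4 * ε * a := by
  rcases eq_or_lt_of_le ha with h | h
  · simp [Feps, ← h]
  · have hs : Real.sqrt (a^2) = a := Real.sqrt_sq ha
    have hεa : 0 < ε + a := by linarith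
    have hA0 : 0 ≤ Real.log ((ε + a) / a) :=
      Real.log_nonneg (by rw [le_div_iff₀ h]; linarith)
    have hA1 : Real.log ((ε + a) / a) ≤ ε / a := by
      have h1 := Real.log_le_sub_one_of_pos (show 0 < (ε + a) / a by positivity)
      have h2 : (ε + a) / a - 1 = ε / a := by field_simp; ring
      linarith
    have hB0 : 0 ≤ Real.log (1 + a / ε) :=
      Real.log_nonneg (by nlinarith [div_nonneg ha hε.le])
    have hB1 : Real.log (1 + a / ε) ≤ a / ε := by
      have h1 := Real.log_le_sub_one_of_pos (show 0 < 1 + a / ε by positivity)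
      linarith
    have hA2 : a^2 * Real.log ((ε + a) / a) ≤ ε * a := by
      have := mul_le_mul_of_nonneg_left hA1 (sq_nonneg a)
      have h2 : a^2 * (ε / a) = ε * a := by field_simp
      linarith
    have hB2 : ε^2 * Real.log (1 + a / ε) ≤ ε * a := by
      have := mul_le_mul_of_nonneg_left hB1 (sq_nonneg ε)
      have h2 : ε^2 * (a / ε) = ε * a := by field_simp
      linarith
    have hA3 : 0 ≤ a^2 * Real.log ((ε + a) / a) := mul_nonneg (sq_nonneg a) hA0
    have hB3 : 0 ≤ ε^2 * Real.log (1 + a / ε) := mul_nonneg (sq_nonneg ε) hB0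
    have hlog : Real.log (ε + a) = Real.log a + Real.log ((ε + a) / a) := by
      rw [← Real.log_mul h.ne' (by positivity)]
      congr 1
      field_simp
    simp only [Feps, hs]
    rw [Real.log_pow, Real.log_pow, Real.log_pow, hlog, abs_le]
    push_cast
    constructor <;> nlinarith [hA2, hB2, hA3, hB3, mul_nonneg (mul_nonneg hε.le h.le) hA0]

theorem stmt_6 (d : ℕ) (Ω : Set (EuclideanSpace ℝ (Fin d)))
    (hΩ : volume Ω < ⊤) (lam ε : ℝ) (hε : 0 < ε)
    (u₀ : EuclideanSpace ℝ (Fin d) → ℂ)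
    (hL1 : Integrable (fun x => ‖u₀ x‖) (volume.restrict Ω))
    (hL2 : Integrable (fun x => (‖u₀ x‖)^2) (volume.restrict Ω))
    (hE : Integrable (fun x => ‖fderiv ℝ u₀ x‖^2 +
      lam * ((‖u₀ x‖)^2 * Real.log ((‖u₀ x‖)^2)
        - (‖u₀ x‖)^2)) (volume.restrict Ω))
    (hEε : Integrable (fun x => ‖fderiv ℝ u₀ x‖^2 +
      lam * Feps ε ((‖u₀ x‖)^2)) (volume.restrict Ω)) :
    |(∫ x in Ω, (‖fderiv ℝ u₀ x‖^2 + lam * Feps ε ((‖u₀ x‖)^2)))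
      - (∫ x in Ω, (‖fderiv ℝ u₀ x‖^2 +
          lam * ((‖u₀ x‖)^2 * Real.log ((‖u₀ x‖)^2)
            - (‖u₀ x‖)^2)))| ≤
      4 * ε * |lam| * ∫ x in Ω, ‖u₀ x‖ := by
  have hdiff0 := hEε.sub hE
  have hfun : (fun x => (‖fderiv ℝ u₀ x‖^2 + lam * Feps ε ((‖u₀ x‖)^2))
      - (‖fderiv ℝ u₀ x‖^2 + lam * ((‖u₀ x‖)^2 * Real.log ((‖u₀ x‖)^2)
            - (‖u₀ x‖)^2)))
      = fun x => lam * (Feps ε ((‖u₀ x‖)^2)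
          - ((‖u₀ x‖)^2 * Real.log ((‖u₀ x‖)^2)
            - (‖u₀ x‖)^2)) := by
    funext x; ring
  have hdiff : Integrable (fun x => lam * (Feps ε ((‖u₀ x‖)^2)
      - ((‖u₀ x‖)^2 * Real.log ((‖u₀ x‖)^2)
        - (‖u₀ x‖)^2))) (volume.restrict Ω) := hfun ▸ hdiff0
  rw [← integral_sub hEε hE]
  rw [show (∫ x in Ω, ((‖fderiv ℝ u₀ x‖^2 + lam * Feps ε ((‖u₀ x‖)^2))
      - (‖fderiv ℝ u₀ x‖^2 + lam * ((‖u₀ x‖)^2 * Real.log ((‖u₀ x‖)^2)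
            - (‖u₀ x‖)^2))))
      = ∫ x in Ω, lam * (Feps ε ((‖u₀ x‖)^2)
          - ((‖u₀ x‖)^2 * Real.log ((‖u₀ x‖)^2)
            - (‖u₀ x‖)^2)) from by rw [hfun]]
  calc |∫ x in Ω, lam * (Feps ε ((‖u₀ x‖)^2)
          - ((‖u₀ x‖)^2 * Real.log ((‖u₀ x‖)^2)
            - (‖u₀ x‖)^2))|
      ≤ ∫ x in Ω, |lam * (Feps ε ((‖u₀ x‖)^2)
          - ((‖u₀ x‖)^2 * Real.log ((‖u₀ x‖)^2)
            - (‖u₀ x‖)^2))| := by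
        have := norm_integral_le_integral_norm (μ := volume.restrict Ω)
          (f := fun x => lam * (Feps ε ((‖u₀ x‖)^2)
            - ((‖u₀ x‖)^2 * Real.log ((‖u₀ x‖)^2)
              - (‖u₀ x‖)^2)))
        simpa only [Real.norm_eq_abs] using this
    _ ≤ ∫ x in Ω, 4 * ε * |lam| * ‖u₀ x‖ := by
        apply integral_mono hdiff.abs (hL1.const_mul (4 * ε * |lam|))
        intro x
        dsimp only
        rw [abs_mul]
        have hk := Feps_key ε hε (‖u₀ x‖) (norm_nonneg _)
        calc |lam| * |Feps ε ((‖u₀ x‖)^2)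
              - ((‖u₀ x‖)^2 * Real.log ((‖u₀ x‖)^2)
                - (‖u₀ x‖)^2)|
            ≤ |lam| * (4 * ε * ‖u₀ x‖) :=
              mul_le_mul_of_nonneg_left hk (abs_nonneg lam)
          _ = 4 * ε * |lam| * ‖u₀ x‖ := by ring
    _ = 4 * ε * |lam| * ∫ x in Ω, ‖u₀ x‖ := integral_const_mul _ _
end

section
/- For every ε > 0 and all nonzero complex numbers u, v, one has |u²/(|u|(ε+|u|)) − v²/(|v|(ε+|v|))| ≤ 4|u−v|/ε. -/
lemma stmt13_real (ε a b d : ℝ) (hε : 0 < ε) (hb : 0 < b) (hba : b ≤ a)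
    (h1 : a - b ≤ d) (hd : 0 ≤ d) (hab : a + b ≤ 2 * d + 2 * b → True) :
    d * (a + b) / (a * (ε + a)) +
      b ^ 2 * ((a - b) * (ε + (a + b))) / ((a * (ε + a)) * (b * (ε + b))) ≤ 4 * d / ε := by
  have ha : 0 < a := lt_of_lt_of_le hb hba
  have t1 : d * (a + b) / (a * (ε + a)) ≤ 2 * d / ε := by
    rw [div_le_div_iff₀ (by positivity) hε]
    nlinarith [mul_nonneg (mul_nonneg hd hε.le) (sub_nonneg.2 hba),
      mul_nonneg (mul_nonneg hd ha.le) ha.le]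
  have e1 : ε * (ε + (a + b)) ≤ (ε + a) * (ε + b) := by nlinarith [mul_nonneg ha.le hb.le]
  have t2 : b ^ 2 * ((a - b) * (ε + (a + b))) / ((a * (ε + a)) * (b * (ε + b))) ≤ 2 * d / ε := by
    rw [div_le_div_iff₀ (by positivity) hε]
    have step : b ^ 2 * ((a - b) * (ε + (a + b))) * ε
        = b ^ 2 * ((a - b) * (ε * (ε + (a + b)))) := by ring
    have inner : (a - b) * (ε * (ε + (a + b))) ≤ d * ((ε + a) * (ε + b)) :=
      mul_le_mul h1 e1 (by positivity) hd
    have s2 : b ^ 2 * ((a - b) * (ε * (ε + (a + b)))) ≤ b ^ 2 * (d * ((ε + a) * (ε + b))) :=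
      mul_le_mul_of_nonneg_left inner (by positivity)
    have s3 : b ^ 2 * (d * ((ε + a) * (ε + b))) ≤ (a * b) * (d * ((ε + a) * (ε + b))) := by
      have : b ^ 2 ≤ a * b := by nlinarith
      exact mul_le_mul_of_nonneg_right this (by positivity)
    have s4 : 0 ≤ d * (a * (ε + a) * (b * (ε + b))) := by positivity
    nlinarith [s2, s3, s4, step]
  calc d * (a + b) / (a * (ε + a)) +
      b ^ 2 * ((a - b) * (ε + (a + b))) / ((a * (ε + a)) * (b * (ε + b)))
      ≤ 2 * d / ε + 2 * d / ε := add_le_add t1 t2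
    _ = 4 * d / ε := by ring

lemma stmt13_aux (ε : ℝ) (hε : 0 < ε) (u v : ℂ) (hu : u ≠ 0) (hv : v ≠ 0)
    (h : ‖v‖ ≤ ‖u‖) :
    ‖u^2 / ((‖u‖ : ℂ) * ((ε : ℂ) + (‖u‖ : ℂ)))
        - v^2 / ((‖v‖ : ℂ) * ((ε : ℂ) + (‖v‖ : ℂ)))‖ ≤
      4 * ‖u - v‖ / ε := by
  set a := ‖u‖ with ha'
  set b := ‖v‖ with hb'
  have ha : 0 < a := norm_pos_iff.mpr hu
  have hb : 0 < b := norm_pos_iff.mpr hv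
  have hA : ((a : ℂ) * ((ε : ℂ) + (a : ℂ))) ≠ 0 := by
    have : ((a : ℂ) * ((ε : ℂ) + (a : ℂ))) = ((a * (ε + a) : ℝ) : ℂ) := by push_cast; ring
    rw [this, Complex.ofReal_ne_zero]
    positivity
  have hB : ((b : ℂ) * ((ε : ℂ) + (b : ℂ))) ≠ 0 := by
    have : ((b : ℂ) * ((ε : ℂ) + (b : ℂ))) = ((b * (ε + b) : ℝ) : ℂ) := by push_cast; ring
    rw [this, Complex.ofReal_ne_zero]
    positivity
  have key : u^2 / ((a : ℂ) * ((ε : ℂ) + (a : ℂ))) - v^2 / ((b : ℂ) * ((ε : ℂ) + (b : ℂ)))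
      = (u - v) * (u + v) / ((a : ℂ) * ((ε : ℂ) + (a : ℂ)))
        + v^2 * (((b : ℂ) * ((ε : ℂ) + (b : ℂ))) - ((a : ℂ) * ((ε : ℂ) + (a : ℂ))))
          / (((a : ℂ) * ((ε : ℂ) + (a : ℂ))) * ((b : ℂ) * ((ε : ℂ) + (b : ℂ)))) := by
    rw [eq_comm, div_add_div _ _ hA (mul_ne_zero hA hB), div_sub_div _ _ hA hB,
      div_eq_div_iff (mul_ne_zero hA (mul_ne_zero hA hB)) (mul_ne_zero hA hB)]
    ring
  rw [key]
  set d := ‖u - v‖ with hd'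
  have hd : 0 ≤ d := norm_nonneg _
  have habd : a - b ≤ d := by
    have := abs_norm_sub_norm_le u v
    have h2 := le_of_abs_le this
    linarith [h2]
  have huv : ‖u + v‖ ≤ a + b := norm_add_le u v
  have absA : ‖(a : ℂ) * ((ε : ℂ) + (a : ℂ))‖ = a * (ε + a) := by
    have e : ((a : ℂ) * ((ε : ℂ) + (a : ℂ))) = ((a * (ε + a) : ℝ) : ℂ) := by push_cast; ring
    rw [e, Complex.norm_real, Real.norm_eq_abs, abs_of_pos (by positivity)]
  have absB : ‖(b : ℂ) * ((ε : ℂ) + (b : ℂ))‖ = b * (ε + b) := by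
    have e : ((b : ℂ) * ((ε : ℂ) + (b : ℂ))) = ((b * (ε + b) : ℝ) : ℂ) := by push_cast; ring
    rw [e, Complex.norm_real, Real.norm_eq_abs, abs_of_pos (by positivity)]
  have absM : ‖((b : ℂ) * ((ε : ℂ) + (b : ℂ))) - ((a : ℂ) * ((ε : ℂ) + (a : ℂ)))‖
      = (a - b) * (ε + (a + b)) := by
    have e : (((b : ℂ) * ((ε : ℂ) + (b : ℂ))) - ((a : ℂ) * ((ε : ℂ) + (a : ℂ))))
        = ((-((a - b) * (ε + (a + b))) : ℝ) : ℂ) := by push_cast; ring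
    rw [e, Complex.norm_real, Real.norm_eq_abs, abs_neg, abs_of_nonneg (by nlinarith)]
  calc ‖(u - v) * (u + v) / ((a : ℂ) * ((ε : ℂ) + (a : ℂ)))
        + v^2 * (((b : ℂ) * ((ε : ℂ) + (b : ℂ))) - ((a : ℂ) * ((ε : ℂ) + (a : ℂ))))
          / (((a : ℂ) * ((ε : ℂ) + (a : ℂ))) * ((b : ℂ) * ((ε : ℂ) + (b : ℂ))))‖
      ≤ ‖(u - v) * (u + v) / ((a : ℂ) * ((ε : ℂ) + (a : ℂ)))‖
        + ‖v^2 * (((b : ℂ) * ((ε : ℂ) + (b : ℂ))) - ((a : ℂ) * ((ε : ℂ) + (a : ℂ))))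
          / (((a : ℂ) * ((ε : ℂ) + (a : ℂ))) * ((b : ℂ) * ((ε : ℂ) + (b : ℂ))))‖ :=
        norm_add_le _ _
    _ = d * ‖u + v‖ / (a * (ε + a))
        + b ^ 2 * ((a - b) * (ε + (a + b))) / ((a * (ε + a)) * (b * (ε + b))) := by
        rw [norm_div, norm_div, absA, norm_mul, norm_mul, norm_mul, absA, absB, norm_pow, absM]
    _ ≤ d * (a + b) / (a * (ε + a))
        + b ^ 2 * ((a - b) * (ε + (a + b))) / ((a * (ε + a)) * (b * (ε + b))) := by
        gcongr
    _ ≤ 4 * d / ε := stmt13_real ε a b d hε hb h habd hd (fun _ => trivial)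

theorem stmt_13 (ε : ℝ) (hε : 0 < ε) (u v : ℂ) (hu : u ≠ 0) (hv : v ≠ 0) :
    ‖u^2 / ((‖u‖ : ℂ) * ((ε : ℂ) + (‖u‖ : ℂ)))
        - v^2 / ((‖v‖ : ℂ) * ((ε : ℂ) + (‖v‖ : ℂ)))‖ ≤
      4 * ‖u - v‖ / ε := by
  rcases le_total (‖v‖) (‖u‖) with h | h
  · exact stmt13_aux ε hε u v hu hv h
  · have := stmt13_aux ε hε v u hv hu h
    have e1 : ‖v - u‖ = ‖u - v‖ := norm_sub_rev v u
    have e2 : ‖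
        v^2 / ((‖v‖ : ℂ) * ((ε : ℂ) + (‖v‖ : ℂ)))
          - u^2 / ((‖u‖ : ℂ) * ((ε : ℂ) + (‖u‖ : ℂ)))‖
        = ‖
        u^2 / ((‖u‖ : ℂ) * ((ε : ℂ) + (‖u‖ : ℂ)))
          - v^2 / ((‖v‖ : ℂ) * ((ε : ℂ) + (‖v‖ : ℂ)))‖ :=
      norm_sub_rev _ _
    rw [e1, e2] at this
    exact this
end
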